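/- The duality axiom of an identical twin Frobenius algebra holds for both pairs (z₁, z₁*) and (z₂, z₂*): for all x, y ∈ A and for k = 1, 2, one has ε_C(x · z_k*(y)) = ε_W(z_k(x) · y). -/

import Mathlib

open TensorProduct Polynomial

noncomputable section

variable {R : Type*} [CommRing R]

/-- The algebra `A = R[X]/(X² - h·X - a)`. -/
abbrev FrobA (a h : R) : Type _ := AdjoinRoot (X ^ 2 - C h * X - C a)

/-- The image of the variable `X` in `A`. -/
abbrev FrobX (a h : R) : FrobA a h := AdjoinRoot.root _

theorem frob_decomp' (a h : R) (x : FrobA a h) :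
    ∃ c d : R, x = c • 1 + d • FrobX a h := by
  rcases subsingleton_or_nontrivial R with hR | hR
  · haveI : Subsingleton (FrobA a h) := Module.subsingleton R _
    exact ⟨0, 0, Subsingleton.elim _ _⟩
  have hm : (X ^ 2 - C h * X - C a).Monic := by
    have e : (X ^ 2 - C h * X - C a) = X ^ (1+1) - (C h * X + C a) := by ring
    rw [e]
    exact monic_X_pow_sub (lt_of_le_of_lt (by compute_degree) (by norm_num))
  obtain ⟨p, rfl⟩ := AdjoinRoot.mk_surjective x
  set f := X ^ 2 - C h * X - C a with hf
  have hmk : AdjoinRoot.mk f p = AdjoinRoot.mk f (p %ₘ f) := by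
    rw [AdjoinRoot.mk_eq_mk]
    exact ⟨p /ₘ f, by linear_combination -(p.modByMonic_add_div f)⟩
  have hlt : (p %ₘ f).degree ≤ 1 := by
    have h1 := degree_modByMonic_lt p hm
    have h2 : f.degree ≤ 2 := by rw [hf]; compute_degree
    have := lt_of_lt_of_le h1 h2
    exact Order.le_of_lt_succ (by exact_mod_cast this)
  obtain ⟨c1, c0, heq⟩ : ∃ c1 c0, p %ₘ f = C c1 * X + C c0 :=
    ⟨_, _, eq_X_add_C_of_degree_le_one hlt⟩
  refine ⟨c0, c1, ?_⟩
  rw [hmk, heq]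
  simp only [map_add, map_mul, AdjoinRoot.mk_X, AdjoinRoot.mk_C, Algebra.smul_def, mul_one,
    AdjoinRoot.algebraMap_eq]
  ring

theorem frob_root_sq (a h : R) :
    (FrobX a h) ^ 2 - algebraMap R (FrobA a h) h * FrobX a h - algebraMap R (FrobA a h) a
      = 0 := by
  have h0 : AdjoinRoot.mk _ (X ^ 2 - C h * X - C a) = 0 := AdjoinRoot.mk_self
  simp only [map_sub, map_pow, map_mul, AdjoinRoot.mk_X, AdjoinRoot.mk_C] at h0
  rw [AdjoinRoot.algebraMap_eq]
  exact h0

theorem frob_prod_decomp (a h : R) (c d e f : R) :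
    ((c • (1 : FrobA a h) + d • FrobX a h) * (e • 1 + f • FrobX a h))
      = (c * e + d * f * a) • (1 : FrobA a h)
        + (c * f + d * e + d * f * h) • FrobX a h := by
  have h0 := frob_root_sq a h
  simp only [Algebra.smul_def, map_mul, map_add, mul_one]
  linear_combination (algebraMap R (FrobA a h) d * algebraMap R (FrobA a h) f) * h0

/-- the duality axiom `ε_C(x · z_k*(y)) = ε_W(z_k(x) · y)` for `k = 1, 2`. -/
theorem duality_axiom (a h i : R) (hi : i ^ 2 = -1)
    (εC εW : FrobA a h →ₗ[R] R)
    (hεC1 : εC 1 = 0) (hεCX : εC (FrobX a h) = 1)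
    (hεW1 : εW 1 = 0) (hεWX : εW (FrobX a h) = -i)
    (z1 z1s z2 z2s : FrobA a h →ₗ[R] FrobA a h)
    (hz1 : z1 = LinearMap.id)
    (hz1s : ∀ x : FrobA a h, z1s x = (-i) • x)
    (hz21 : z2 1 = 1)
    (hz2X : z2 (FrobX a h) = algebraMap R (FrobA a h) h - FrobX a h)
    (hz2s1 : z2s 1 = i • (1 : FrobA a h))
    (hz2sX : z2s (FrobX a h) = i • (algebraMap R (FrobA a h) h - FrobX a h)) :
    (∀ x y : FrobA a h, εC (x * z1s y) = εW (z1 x * y)) ∧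
    (∀ x y : FrobA a h, εC (x * z2s y) = εW (z2 x * y)) := by
  constructor
  · intro x y
    obtain ⟨c, d, hx⟩ := frob_decomp' a h x
    obtain ⟨e, f, hy⟩ := frob_decomp' a h y
    rw [hz1, hz1s, LinearMap.id_apply, mul_smul_comm, map_smul]
    rw [hx, hy, frob_prod_decomp]
    simp only [map_add, map_smul, hεC1, hεCX, hεW1, hεWX, smul_eq_mul]
    ring
  · intro x y
    obtain ⟨c, d, hx⟩ := frob_decomp' a h x
    obtain ⟨e, f, hy⟩ := frob_decomp' a h y
    have hz2sy : z2s y = (i * e + i * f * h) • (1 : FrobA a h) + (-(i * f)) • FrobX a h := by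
      rw [hy, map_add, map_smul, map_smul, hz2s1, hz2sX,
        Algebra.algebraMap_eq_smul_one]
      module
    have hz2x : z2 x = (c + d * h) • (1 : FrobA a h) + (-d) • FrobX a h := by
      rw [hx, map_add, map_smul, map_smul, hz21, hz2X,
        Algebra.algebraMap_eq_smul_one]
      module
    rw [hz2sy, hz2x, hx, hy, frob_prod_decomp, frob_prod_decomp]
    simp only [map_add, map_smul, hεC1, hεCX, hεW1, hεWX, smul_eq_mul]
    ring

end
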